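/- Let p be an odd prime, let 0 < α < 1/2 and β₀ > 0 be real numbers with α + β₀ < 1/2, and suppose that property P(α, β₀) holds for p. Let τ be any real number with max{α + β₀, 1/2 − β₀} < τ < 1/2. Then for every pair of disjoint subsets I, J ⊆ {1, …, p} with |I| ≤ p^{τ+β₀} and |J| ≤ p^{τ+β₀}, the columns φ_i of the Paley matrix Φ_p satisfy |⟨∑_{i∈I} φ_i, ∑_{j∈J} φ_j⟩| ≤ 2·p^{τ−1/2}·√(|I||J|); that is, Φ_p has the (p^{τ+β₀}, 2p^{τ−1/2})-flat restricted isometry property. -/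

import Mathlib

open Finset

/-- Quadratic character of `ZMod p`. -/
noncomputable def paleyChar (p : ℕ) (x : ZMod p) : ℤ :=
  open Classical in
  if x = 0 then 0 else if IsSquare x then 1 else -1

/-- Canonical additive character of `ZMod p`. -/
noncomputable def paleyPsi (p : ℕ) (x : ZMod p) : ℂ :=
  Complex.exp (2 * Real.pi * Complex.I * (x.val : ℂ) / p)

/-- The Paley matrix with respect to a labelling `a` of `𝔽_p` and a labelling `b` of the
nonzero quadratic residues.  It has `(p-1)/2 + 1 = (p+1)/2` rows and `p + 1` columns. -/
noncomputable def paleyMatrix (p : ℕ) (a : Fin p → ZMod p) (b : Fin ((p - 1) / 2) → ZMod p) :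
    Matrix (Fin ((p - 1) / 2 + 1)) (Fin (p + 1)) ℂ := fun i j =>
  Fin.cases
    (if (j : ℕ) < p then (1 : ℂ) / Real.sqrt p
     else Complex.I ^ (if p % 4 = 3 then 1 else 0))
    (fun k =>
      if hj : (j : ℕ) < p then (Real.sqrt (2 / p) : ℂ) * paleyPsi p (b k * a ⟨j, hj⟩)
      else 0) i

/-- The standard Hermitian inner product on `ℂ^M` (linear in the first argument). -/
noncomputable def herm {M : ℕ} (x y : Fin M → ℂ) : ℂ :=
  ∑ k, x k * (starRingEnd ℂ) (y k)

/-- Property `𝒫(α, β)` from the Paley graph conjecture: for all subsets `S, T` of `𝔽_p`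
of size greater than `p ^ α`, the double character sum over `S × T` is at most
`p ^ (-β) * |S| * |T|` in absolute value. -/
def PropP (p : ℕ) [NeZero p] (α β : ℝ) : Prop :=
  ∀ S T : Finset (ZMod p), (p : ℝ) ^ α < S.card → (p : ℝ) ^ α < T.card →
    |∑ s ∈ S, ∑ t ∈ T, (paleyChar p (s - t) : ℝ)| ≤ (p : ℝ) ^ (-β) * S.card * T.card

/-! ### Auxiliary definitions and lemmas -/

/-- The quadratic character with values in `ℂ`. -/
noncomputable def qchar (p : ℕ) [Fact p.Prime] : MulChar (ZMod p) ℂ :=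
  (quadraticChar (ZMod p)).ringHomComp (Int.castRingHom ℂ)

/-- The Gauss sum of the quadratic character with the standard additive character. -/
noncomputable def gsum (p : ℕ) [Fact p.Prime] : ℂ := gaussSum (qchar p) ZMod.stdAddChar

lemma paleyPsi_eq (p : ℕ) [NeZero p] (x : ZMod p) : paleyPsi p x = ZMod.stdAddChar x := by
  rw [ZMod.stdAddChar_apply, ZMod.toCircle_apply, paleyPsi]

lemma paleyChar_eq (p : ℕ) [Fact p.Prime] (x : ZMod p) :
    ((paleyChar p x : ℤ) : ℂ) = qchar p x := by
  classical
  simp [paleyChar, qchar, MulChar.ringHomComp, quadraticChar_apply, quadraticCharFun]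

lemma ringChar_ne_two (p : ℕ) [Fact p.Prime] (hodd : Odd p) : ringChar (ZMod p) ≠ 2 := by
  rw [ZMod.ringChar_zmod_n]
  rintro rfl; exact (Nat.not_odd_iff_even.mpr even_two) hodd

lemma qchar_ne_one (p : ℕ) [Fact p.Prime] (hodd : Odd p) : qchar p ≠ 1 :=
  (MulChar.ringHomComp_ne_one_iff (Int.cast_injective)).mpr
    (quadraticChar_ne_one (ringChar_ne_two p hodd))

lemma qchar_isQuadratic (p : ℕ) [Fact p.Prime] : (qchar p).IsQuadratic :=
  (quadraticChar_isQuadratic (ZMod p)).comp _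

lemma abs_gsum (p : ℕ) [Fact p.Prime] (hodd : Odd p) :
    ‖gsum p‖ = Real.sqrt p := by
  have hsq := gaussSum_sq (qchar_ne_one p hodd) (qchar_isQuadratic p)
    (ZMod.isPrimitive_stdAddChar p)
  have hne : qchar p (-1) ≠ 0 := by
    rw [← paleyChar_eq]
    have h1 : (-1 : ZMod p) ≠ 0 := by
      simp [neg_eq_zero]
    simp only [paleyChar, h1, if_false, Int.cast_eq_zero]
    split_ifs <;> simp
  have habs : ‖gsum p‖ ^ 2 = p := by
    rw [← norm_pow, gsum, hsq]
    rcases qchar_isQuadratic p (-1) with h | h | h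
    · exact absurd h hne
    · rw [h]; simp [ZMod.card]
    · rw [h]; simp [ZMod.card]
  rw [show (p : ℝ) = ‖gsum p‖ ^ 2 from habs.symm, Real.sqrt_sq (by positivity)]

section KeySum
variable (p : ℕ) [Fact p.Prime]

lemma count_fiber (hodd : Odd p) (y : ZMod p) :
    ((univ.filter (fun t : ZMod p => t * t = y)).card : ℤ) = 1 + quadraticChar (ZMod p) y := by
  classical
  rcases eq_or_ne y 0 with rfl | hy
  · rw [show (univ.filter (fun t : ZMod p => t * t = 0)) = {0} by
      ext t; simp [mul_self_eq_zero]]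
    simp
  · by_cases hsq : IsSquare y
    · obtain ⟨c, rfl⟩ := hsq
      have hc : c ≠ 0 := by rintro rfl; simp at hy
      have hcc : c ≠ -c := by
        intro h
        have h2 : (2 : ZMod p) * c = 0 := by ring_nf; linear_combination h
        have h2n : (2 : ZMod p) ≠ 0 := by
          have hnd : ¬ (p ∣ 2) := by
            intro hd
            rcases (Nat.dvd_prime Nat.prime_two).mp hd with h | h
            · exact (Fact.out (p := p.Prime)).one_lt.ne' h
            · rw [h] at hodd; exact (Nat.not_odd_iff_even.mpr even_two) hodd
          simpa [ZMod.natCast_eq_zero_iff] using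
            (show ((2:ℕ) : ZMod p) ≠ 0 from fun hh =>
              hnd ((ZMod.natCast_eq_zero_iff 2 p).mp hh))
        rcases mul_eq_zero.mp h2 with h | h
        · exact h2n h
        · exact hc h
      rw [show (univ.filter (fun t : ZMod p => t * t = c * c)) = {c, -c} by
        ext t
        simp only [mem_filter, mem_univ, true_and, mem_insert, mem_singleton]
        constructor
        · intro h
          have : (t - c) * (t + c) = 0 := by ring_nf; linear_combination h
          rcases mul_eq_zero.mp this with h | h
          · left; linear_combination h
          · right; linear_combination h
        · rintro (rfl | rfl) <;> ring]
      rw [(quadraticChar_one_iff_isSquare hy).mpr ⟨c, rfl⟩ ,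
        card_insert_of_notMem (by simpa using hcc), card_singleton]
      rfl
    · rw [show (univ.filter (fun t : ZMod p => t * t = y)) = ∅ by
        ext t
        simp only [mem_filter, mem_univ, true_and, notMem_empty, iff_false]
        intro h; exact hsq ⟨t, h.symm⟩]
      rw [quadraticChar_neg_one_iff_not_isSquare.mpr hsq]
      simp

lemma sum_sq (hodd : Odd p) (F : ZMod p → ℂ) :
    ∑ t : ZMod p, F (t * t) =
      ∑ y : ZMod p, ((1 + quadraticChar (ZMod p) y : ℤ) : ℂ) * F y := by
  classical
  rw [← Finset.sum_fiberwise univ (fun t : ZMod p => t * t) (fun t => F (t * t))]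
  refine Finset.sum_congr rfl fun y _ => ?_
  rw [show ∑ t ∈ univ.filter (fun t : ZMod p => t * t = y), F (t * t)
      = ∑ t ∈ univ.filter (fun t : ZMod p => t * t = y), F y from
    Finset.sum_congr rfl fun t ht => by rw [(Finset.mem_filter.mp ht).2]]
  rw [Finset.sum_const, ← count_fiber p hodd y]
  push_cast
  ring

lemma qchar_ne_zero {x : ZMod p} (hx : x ≠ 0) : qchar p x ≠ 0 := by
  simp only [qchar, MulChar.ringHomComp_apply, Int.coe_castRingHom, Int.cast_ne_zero]
  exact fun h => hx (quadraticChar_eq_zero_iff.mp h)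

lemma qchar_mul_self {x : ZMod p} (hx : x ≠ 0) : qchar p x * qchar p x = 1 := by
  rcases qchar_isQuadratic p x with h | h | h
  · exact absurd h (qchar_ne_zero p hx)
  · rw [h]; ring
  · rw [h]; ring

lemma keyA (hodd : Odd p) {x : ZMod p} (hx : x ≠ 0) :
    ∑ t : ZMod p, ZMod.stdAddChar (t * t * x) = qchar p x * gsum p := by
  classical
  rw [sum_sq p hodd (fun y => ZMod.stdAddChar (y * x))]
  have h1 : ∀ y : ZMod p, ((1 + quadraticChar (ZMod p) y : ℤ) : ℂ) * ZMod.stdAddChar (y * x)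
      = ZMod.stdAddChar (y * x) + qchar p y * ZMod.stdAddChar (y * x) := by
    intro y
    push_cast
    rw [show ((quadraticChar (ZMod p) y : ℤ) : ℂ) = qchar p y from rfl]
    ring
  rw [Finset.sum_congr rfl fun y _ => h1 y, Finset.sum_add_distrib]
  rw [AddChar.sum_mulShift x (ZMod.isPrimitive_stdAddChar p), if_neg hx]
  have hmul : ∑ y : ZMod p, qchar p y * ZMod.stdAddChar (y * x)
      = gaussSum (qchar p) (AddChar.mulShift ZMod.stdAddChar x) := by
    rw [gaussSum]
    exact Finset.sum_congr rfl fun y _ => by rw [AddChar.mulShift_apply, mul_comm x y]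
  rw [hmul]
  push_cast
  rw [zero_add]
  have hu : IsUnit x := hx.isUnit
  have hg := gaussSum_mulShift (qchar p) ZMod.stdAddChar hu.unit
  rw [hu.unit_spec] at hg
  calc gaussSum (qchar p) (AddChar.mulShift ZMod.stdAddChar x)
      = qchar p x * qchar p x * gaussSum (qchar p) (AddChar.mulShift ZMod.stdAddChar x) := by
        rw [qchar_mul_self p hx, one_mul]
    _ = qchar p x * gsum p := by rw [mul_assoc, hg]; rfl

lemma keyB (hodd : Odd p) (b : Fin ((p - 1) / 2) → ZMod p) (hb : Function.Injective b)
    (hbr : Set.range b = {x : ZMod p | x ≠ 0 ∧ IsSquare x}) (x : ZMod p) :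
    ∑ t : ZMod p, ZMod.stdAddChar (t * t * x) =
      1 + 2 * ∑ k : Fin ((p - 1) / 2), ZMod.stdAddChar (b k * x) := by
  classical
  rw [sum_sq p hodd (fun y => ZMod.stdAddChar (y * x))]
  have hcoef : ∀ y : ZMod p, ((1 + quadraticChar (ZMod p) y : ℤ) : ℂ)
      = (if y = 0 then 1 else 0) + (if y ≠ 0 ∧ IsSquare y then 2 else 0) := by
    intro y
    rcases eq_or_ne y 0 with rfl | hy
    · simp
    · by_cases hs : IsSquare y
      · rw [(quadraticChar_one_iff_isSquare hy).mpr hs, if_neg hy, if_pos ⟨hy, hs⟩]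
        norm_num
      · rw [quadraticChar_neg_one_iff_not_isSquare.mpr hs, if_neg hy,
          if_neg (fun h => hs h.2)]
        norm_num
  calc ∑ y : ZMod p, ((1 + quadraticChar (ZMod p) y : ℤ) : ℂ) * ZMod.stdAddChar (y * x)
      = ∑ y : ZMod p, ((if y = 0 then ZMod.stdAddChar (y * x) else 0)
          + (if y ≠ 0 ∧ IsSquare y then 2 * ZMod.stdAddChar (y * x) else 0)) := by
        refine Finset.sum_congr rfl fun y _ => ?_
        rw [hcoef y]
        split_ifs <;> ring
    _ = 1 + 2 * ∑ k : Fin ((p - 1) / 2), ZMod.stdAddChar (b k * x) := by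
        rw [Finset.sum_add_distrib, Finset.sum_ite_eq' univ (0 : ZMod p)
          (fun y => ZMod.stdAddChar (y * x)), if_pos (mem_univ _)]
        rw [← Finset.sum_filter]
        have himg : univ.filter (fun y : ZMod p => y ≠ 0 ∧ IsSquare y) = univ.image b := by
          ext y
          simp only [mem_filter, mem_univ, true_and, mem_image]
          constructor
          · intro h
            have : y ∈ Set.range b := by rw [hbr]; exact h
            obtain ⟨k, hk⟩ := this
            exact ⟨k, hk⟩
          · rintro ⟨k, rfl⟩
            have : b k ∈ Set.range b := ⟨k, rfl⟩
            rw [hbr] at this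
            exact this
        rw [himg, Finset.sum_image (fun k _ l _ h => hb h)]
        rw [Finset.mul_sum]
        simp

lemma key_sum (hodd : Odd p)
    (b : Fin ((p - 1) / 2) → ZMod p) (hb : Function.Injective b)
    (hbr : Set.range b = {x : ZMod p | x ≠ 0 ∧ IsSquare x}) {x : ZMod p} (hx : x ≠ 0) :
    1 + 2 * ∑ k : Fin ((p - 1) / 2), ZMod.stdAddChar (b k * x) = qchar p x * gsum p := by
  rw [← keyB p hodd b hb hbr x, keyA p hodd hx]

end KeySum

lemma conj_std (p : ℕ) [NeZero p] (y : ZMod p) :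
    (starRingEnd ℂ) (ZMod.stdAddChar y) = ZMod.stdAddChar (-y) := by
  rw [ZMod.stdAddChar_apply, ZMod.stdAddChar_apply, AddChar.map_neg_eq_inv,
    ← Circle.coe_inv_eq_conj, Circle.coe_inv]

lemma herm_sum {M : ℕ} {ι : Type*} (I J : Finset ι) (v w : ι → Fin M → ℂ) :
    herm (fun m => ∑ i ∈ I, v i m) (fun m => ∑ j ∈ J, w j m)
      = ∑ i ∈ I, ∑ j ∈ J, herm (v i) (w j) := by
  unfold herm
  calc ∑ k, (∑ i ∈ I, v i k) * (starRingEnd ℂ) (∑ j ∈ J, w j k)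
      = ∑ k : Fin M, ∑ i ∈ I, ∑ j ∈ J, v i k * (starRingEnd ℂ) (w j k) := by
        refine Finset.sum_congr rfl fun k _ => ?_
        rw [map_sum, Finset.sum_mul_sum]
    _ = ∑ i ∈ I, ∑ k : Fin M, ∑ j ∈ J, v i k * (starRingEnd ℂ) (w j k) := Finset.sum_comm
    _ = ∑ i ∈ I, ∑ j ∈ J, ∑ k, v i k * (starRingEnd ℂ) (w j k) :=
        Finset.sum_congr rfl fun i _ => Finset.sum_comm

section Cols
variable (p : ℕ) [Fact p.Prime] (a : Fin p → ZMod p) (b : Fin ((p - 1) / 2) → ZMod p)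

lemma hermCol_main (hodd : Odd p) (hb : Function.Injective b)
    (hbr : Set.range b = {x : ZMod p | x ≠ 0 ∧ IsSquare x}) {i j : Fin (p + 1)}
    (hi : (i : ℕ) < p) (hj : (j : ℕ) < p)
    (hne : a ⟨i, hi⟩ ≠ a ⟨j, hj⟩) :
    herm (fun m => paleyMatrix p a b m i) (fun m => paleyMatrix p a b m j)
      = qchar p (a ⟨i, hi⟩ - a ⟨j, hj⟩) * gsum p / p := by
  have hp0 : (0 : ℝ) < p := by exact_mod_cast (Fact.out (p := p.Prime)).pos
  have hpC : (p : ℂ) ≠ 0 := by exact_mod_cast hp0.ne'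
  rw [herm, Fin.sum_univ_succ]
  simp only [paleyMatrix, Fin.cases_zero, Fin.cases_succ, dif_pos hi, dif_pos hj,
    if_pos hi, if_pos hj]
  have h0 : (1 : ℂ) / Real.sqrt p * (starRingEnd ℂ) ((1 : ℂ) / Real.sqrt p)
      = 1 / (p : ℂ) := by
    rw [map_div₀, map_one, Complex.conj_ofReal]
    rw [div_mul_div_comm, one_mul, ← Complex.ofReal_mul, Real.mul_self_sqrt hp0.le]
    rw [Complex.ofReal_natCast]
  have hk : ∀ k : Fin ((p - 1) / 2),
      (Real.sqrt (2 / p) : ℂ) * paleyPsi p (b k * a ⟨i, hi⟩) *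
        (starRingEnd ℂ) ((Real.sqrt (2 / p) : ℂ) * paleyPsi p (b k * a ⟨j, hj⟩))
      = 2 / (p : ℂ) * ZMod.stdAddChar (b k * (a ⟨i, hi⟩ - a ⟨j, hj⟩)) := by
    intro k
    rw [paleyPsi_eq, paleyPsi_eq, RingHom.map_mul (starRingEnd ℂ), Complex.conj_ofReal, conj_std]
    have hss : (Real.sqrt (2 / p) : ℂ) * Real.sqrt (2 / p) = 2 / (p : ℂ) := by
      rw [← Complex.ofReal_mul, Real.mul_self_sqrt (by positivity)]
      push_cast; ring
    calc _ = ((Real.sqrt (2 / p) : ℂ) * Real.sqrt (2 / p)) *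
          (ZMod.stdAddChar (b k * a ⟨i, hi⟩) * ZMod.stdAddChar (-(b k * a ⟨j, hj⟩))) := by ring
      _ = 2 / (p : ℂ) * ZMod.stdAddChar (b k * (a ⟨i, hi⟩ - a ⟨j, hj⟩)) := by
          rw [hss, ← AddChar.map_add_eq_mul]
          ring_nf
  rw [h0, Finset.sum_congr rfl fun k _ => hk k, ← Finset.mul_sum]
  have hkey := key_sum p hodd b hb hbr (sub_ne_zero.mpr hne)
  calc (1 : ℂ) / p + 2 / p * ∑ k : Fin ((p - 1) / 2),
        ZMod.stdAddChar (b k * (a ⟨↑i, hi⟩ - a ⟨↑j, hj⟩))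
      = (1 + 2 * ∑ k : Fin ((p - 1) / 2),
          ZMod.stdAddChar (b k * (a ⟨↑i, hi⟩ - a ⟨↑j, hj⟩))) / p := by ring
    _ = qchar p (a ⟨i, hi⟩ - a ⟨j, hj⟩) * gsum p / p := by rw [hkey]

lemma not_last_lt {j : Fin (p + 1)} (hj : j ≠ Fin.last p) : (j : ℕ) < p :=
  lt_of_le_of_ne (Nat.lt_succ_iff.mp j.isLt) (fun h => hj (Fin.ext (by simp [h])))

lemma abs_hermCol_right {i : Fin (p + 1)} (hi : (i : ℕ) < p) :
    ‖herm (fun m => paleyMatrix p a b m i)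
      (fun m => paleyMatrix p a b m (Fin.last p))‖ = 1 / Real.sqrt p := by
  have hnp : ¬ ((Fin.last p : Fin (p+1)) : ℕ) < p := by simp
  rw [herm, Fin.sum_univ_succ]
  simp only [paleyMatrix, Fin.cases_zero, Fin.cases_succ, if_pos hi, if_neg hnp,
    dif_pos hi, dif_neg hnp, map_zero, mul_zero, Finset.sum_const_zero, add_zero]
  rw [norm_mul]
  simp [norm_pow, Complex.norm_conj, Complex.norm_I, norm_div,
    Complex.norm_real, abs_of_nonneg (Real.sqrt_nonneg _)]
  split_ifs <;> simp [Complex.norm_I]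

lemma abs_hermCol_left {j : Fin (p + 1)} (hj : (j : ℕ) < p) :
    ‖herm (fun m => paleyMatrix p a b m (Fin.last p))
      (fun m => paleyMatrix p a b m j)‖ = 1 / Real.sqrt p := by
  have hnp : ¬ ((Fin.last p : Fin (p+1)) : ℕ) < p := by simp
  rw [herm, Fin.sum_univ_succ]
  simp only [paleyMatrix, Fin.cases_zero, Fin.cases_succ, if_pos hj, if_neg hnp,
    dif_pos hj, dif_neg hnp, zero_mul, Finset.sum_const_zero, add_zero]
  rw [norm_mul]
  simp [norm_pow, Complex.norm_conj, Complex.norm_I, norm_div,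
    Complex.norm_real, abs_of_nonneg (Real.sqrt_nonneg _)]
  split_ifs <;> simp [Complex.norm_I]

end Cols

lemma abs_paleyChar_le (p : ℕ) (x : ZMod p) : |(paleyChar p x : ℝ)| ≤ 1 := by
  classical
  unfold paleyChar
  split_ifs <;> norm_num

lemma triv_bound (p : ℕ) [NeZero p] (S T : Finset (ZMod p)) :
    |∑ s ∈ S, ∑ t ∈ T, (paleyChar p (s - t) : ℝ)| ≤ (S.card : ℝ) * T.card := by
  calc |∑ s ∈ S, ∑ t ∈ T, (paleyChar p (s - t) : ℝ)|
      ≤ ∑ s ∈ S, |∑ t ∈ T, (paleyChar p (s - t) : ℝ)| := Finset.abs_sum_le_sum_abs _ _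
    _ ≤ ∑ s ∈ S, ∑ t ∈ T, |(paleyChar p (s - t) : ℝ)| :=
        Finset.sum_le_sum fun s _ => Finset.abs_sum_le_sum_abs _ _
    _ ≤ ∑ s ∈ S, ∑ t ∈ T, (1 : ℝ) :=
        Finset.sum_le_sum fun s _ => Finset.sum_le_sum fun t _ => abs_paleyChar_le p _
    _ = (S.card : ℝ) * T.card := by simp [mul_comm]

lemma charBound (p : ℕ) [NeZero p] (α β₀ τ : ℝ) (h1p : (1 : ℝ) ≤ p)
    (hτge : α + β₀ ≤ τ) (hP : PropP p α β₀) (S T : Finset (ZMod p))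
    (hS : (S.card : ℝ) ≤ (p : ℝ) ^ (τ + β₀)) (hT : (T.card : ℝ) ≤ (p : ℝ) ^ (τ + β₀)) :
    |∑ s ∈ S, ∑ t ∈ T, (paleyChar p (s - t) : ℝ)|
      ≤ (p : ℝ) ^ τ * Real.sqrt ((S.card : ℝ) * T.card) := by
  have hp0 : (0 : ℝ) < p := lt_of_lt_of_le one_pos h1p
  set x : ℝ := (S.card : ℝ) with hx
  set y : ℝ := (T.card : ℝ) with hy
  have hx0 : 0 ≤ x := Nat.cast_nonneg _
  have hy0 : 0 ≤ y := Nat.cast_nonneg _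
  have hxy : x * y = Real.sqrt (x * y) * Real.sqrt (x * y) :=
    (Real.mul_self_sqrt (by positivity)).symm
  by_cases hS' : (p : ℝ) ^ α < x
  · by_cases hT' : (p : ℝ) ^ α < y
    · have h := hP S T hS' hT'
      have hsq : Real.sqrt (x * y) ≤ (p : ℝ) ^ (τ + β₀) := by
        calc Real.sqrt (x * y) ≤ Real.sqrt ((p : ℝ) ^ (τ + β₀) * (p : ℝ) ^ (τ + β₀)) :=
              Real.sqrt_le_sqrt (mul_le_mul hS hT hy0 (by positivity))
          _ = (p : ℝ) ^ (τ + β₀) := Real.sqrt_mul_self (by positivity)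
      calc |∑ s ∈ S, ∑ t ∈ T, (paleyChar p (s - t) : ℝ)|
          ≤ (p : ℝ) ^ (-β₀) * x * y := h
        _ = (p : ℝ) ^ (-β₀) * (Real.sqrt (x * y) * Real.sqrt (x * y)) := by
            rw [← hxy]; ring
        _ ≤ (p : ℝ) ^ (-β₀) * ((p : ℝ) ^ (τ + β₀) * Real.sqrt (x * y)) := by
            have := mul_le_mul_of_nonneg_right hsq (Real.sqrt_nonneg (x * y))
            exact mul_le_mul_of_nonneg_left this (by positivity)
        _ = (p : ℝ) ^ τ * Real.sqrt (x * y) := by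
            rw [← mul_assoc, ← Real.rpow_add hp0]
            ring_nf
    · push_neg at hT'
      have hsq : Real.sqrt (x * y) ≤ (p : ℝ) ^ ((τ + β₀ + α) / 2) := by
        calc Real.sqrt (x * y) ≤ Real.sqrt ((p : ℝ) ^ (τ + β₀) * (p : ℝ) ^ α) :=
              Real.sqrt_le_sqrt (mul_le_mul hS hT' hy0 (by positivity))
          _ = (p : ℝ) ^ ((τ + β₀ + α) / 2) := by
              rw [← Real.rpow_add hp0, Real.sqrt_eq_rpow, ← Real.rpow_mul hp0.le]
              ring_nf
      calc |∑ s ∈ S, ∑ t ∈ T, (paleyChar p (s - t) : ℝ)|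
          ≤ x * y := triv_bound p S T
        _ = Real.sqrt (x * y) * Real.sqrt (x * y) := hxy
        _ ≤ (p : ℝ) ^ ((τ + β₀ + α) / 2) * Real.sqrt (x * y) :=
            mul_le_mul_of_nonneg_right hsq (Real.sqrt_nonneg _)
        _ ≤ (p : ℝ) ^ τ * Real.sqrt (x * y) := by
            have : (τ + β₀ + α) / 2 ≤ τ := by linarith
            exact mul_le_mul_of_nonneg_right
              (Real.rpow_le_rpow_of_exponent_le h1p this) (Real.sqrt_nonneg _)
  · push_neg at hS'
    have hsq : Real.sqrt (x * y) ≤ (p : ℝ) ^ ((τ + β₀ + α) / 2) := by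
      calc Real.sqrt (x * y) ≤ Real.sqrt ((p : ℝ) ^ α * (p : ℝ) ^ (τ + β₀)) :=
            Real.sqrt_le_sqrt (mul_le_mul hS' hT hy0 (by positivity))
        _ = (p : ℝ) ^ ((τ + β₀ + α) / 2) := by
            rw [← Real.rpow_add hp0, Real.sqrt_eq_rpow, ← Real.rpow_mul hp0.le]
            ring_nf
    calc |∑ s ∈ S, ∑ t ∈ T, (paleyChar p (s - t) : ℝ)|
        ≤ x * y := triv_bound p S T
      _ = Real.sqrt (x * y) * Real.sqrt (x * y) := hxy
      _ ≤ (p : ℝ) ^ ((τ + β₀ + α) / 2) * Real.sqrt (x * y) :=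
          mul_le_mul_of_nonneg_right hsq (Real.sqrt_nonneg _)
      _ ≤ (p : ℝ) ^ τ * Real.sqrt (x * y) := by
          have : (τ + β₀ + α) / 2 ≤ τ := by linarith
          exact mul_le_mul_of_nonneg_right
            (Real.rpow_le_rpow_of_exponent_le h1p this) (Real.sqrt_nonneg _)

lemma cross_bound (p : ℕ) (τ β₀ : ℝ) (h1p : (1 : ℝ) ≤ p) (hβτ : β₀ ≤ τ)
    {x y : ℝ} (hx1 : 1 ≤ x) (hy0 : 0 ≤ y) (hy : y ≤ (p : ℝ) ^ (τ + β₀)) :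
    y / Real.sqrt p ≤ (p : ℝ) ^ (τ - 1/2) * Real.sqrt (x * y) := by
  have hp0 : (0 : ℝ) < p := lt_of_lt_of_le one_pos h1p
  have hsp : Real.sqrt p = (p : ℝ) ^ ((1:ℝ)/2) := Real.sqrt_eq_rpow p
  have hsy : Real.sqrt y ≤ (p : ℝ) ^ ((τ + β₀) / 2) := by
    calc Real.sqrt y ≤ Real.sqrt ((p : ℝ) ^ (τ + β₀)) := Real.sqrt_le_sqrt hy
      _ = (p : ℝ) ^ ((τ + β₀) / 2) := by
          rw [Real.sqrt_eq_rpow, ← Real.rpow_mul hp0.le]; ring_nf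
  have h1 : y = Real.sqrt y * Real.sqrt y := (Real.mul_self_sqrt hy0).symm
  have h2 : Real.sqrt y ≤ Real.sqrt (x * y) := by
    apply Real.sqrt_le_sqrt; nlinarith
  calc y / Real.sqrt p = Real.sqrt y * Real.sqrt y * (p : ℝ) ^ (-(1:ℝ)/2) := by
        rw [← h1, hsp, div_eq_mul_inv, ← Real.rpow_neg hp0.le]
        norm_num
    _ ≤ (p : ℝ) ^ ((τ + β₀) / 2) * Real.sqrt (x * y) * (p : ℝ) ^ (-(1:ℝ)/2) := by
        have h3 : Real.sqrt y * Real.sqrt y ≤ (p : ℝ) ^ ((τ + β₀) / 2) * Real.sqrt (x * y) :=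
          mul_le_mul hsy h2 (Real.sqrt_nonneg _) (by positivity)
        exact mul_le_mul_of_nonneg_right h3 (by positivity)
    _ ≤ (p : ℝ) ^ τ * Real.sqrt (x * y) * (p : ℝ) ^ (-(1:ℝ)/2) := by
        have h3 : (τ + β₀) / 2 ≤ τ := by linarith
        exact mul_le_mul_of_nonneg_right
          (mul_le_mul_of_nonneg_right
            (Real.rpow_le_rpow_of_exponent_le h1p h3) (Real.sqrt_nonneg (x*y)))
          (by positivity)
    _ = (p : ℝ) ^ (τ - 1/2) * Real.sqrt (x * y) := by
        rw [mul_right_comm, ← Real.rpow_add hp0]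
        ring_nf

theorem paley_flat_rip (p : ℕ) [Fact p.Prime] (hodd : Odd p)
    (a : Fin p → ZMod p) (ha : Function.Bijective a) (ha0 : a 0 = 0)
    (b : Fin ((p - 1) / 2) → ZMod p) (hb : Function.Injective b)
    (hbr : Set.range b = {x : ZMod p | x ≠ 0 ∧ IsSquare x})
    (α β₀ τ : ℝ) (hα0 : 0 < α) (hα : α < 1 / 2) (hβ₀ : 0 < β₀) (hαβ : α + β₀ < 1 / 2)
    (hP : PropP p α β₀)
    (hτl : max (α + β₀) (1 / 2 - β₀) < τ) (hτr : τ < 1 / 2) :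
    ∀ I J : Finset (Fin (p + 1)), Disjoint I J →
      (I.card : ℝ) ≤ (p : ℝ) ^ (τ + β₀) → (J.card : ℝ) ≤ (p : ℝ) ^ (τ + β₀) →
      ‖herm (fun m => ∑ i ∈ I, paleyMatrix p a b m i)
          (fun m => ∑ j ∈ J, paleyMatrix p a b m j)‖ ≤
        2 * (p : ℝ) ^ (τ - 1 / 2) * Real.sqrt ((I.card : ℝ) * (J.card : ℝ)) := by
  intro I J hIJ hI hJ
  classical
  have h1p : (1 : ℝ) ≤ p := by exact_mod_cast (Fact.out (p := p.Prime)).one_lt.le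
  have hp0 : (0 : ℝ) < p := lt_of_lt_of_le one_pos h1p
  have hsp0 : (0 : ℝ) < Real.sqrt p := Real.sqrt_pos.mpr hp0
  have hτge : α + β₀ ≤ τ := ((le_max_left _ _).trans_lt hτl).le
  have hβτ : β₀ ≤ τ := by linarith
  set R : ℝ := (p : ℝ) ^ (τ - 1/2) * Real.sqrt ((I.card : ℝ) * (J.card : ℝ)) with hRdef
  have hR0 : 0 ≤ R := by positivity
  set h : Fin (p+1) → Fin (p+1) → ℂ := fun i j =>
    herm (fun m => paleyMatrix p a b m i) (fun m => paleyMatrix p a b m j) with hhdef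
  rw [herm_sum I J (fun i m => paleyMatrix p a b m i) (fun j m => paleyMatrix p a b m j)]
  -- the labelling as a function on column indices
  set f : Fin (p+1) → ZMod p := fun i => if hi : (i : ℕ) < p then a ⟨i, hi⟩ else 0 with hfdef
  set I' : Finset (Fin (p+1)) := I.erase (Fin.last p) with hI'def
  set J' : Finset (Fin (p+1)) := J.erase (Fin.last p) with hJ'def
  -- values of the Gram matrix on the main part
  have hmem : ∀ i ∈ I', ∀ j ∈ J', h i j = qchar p (f i - f j) * gsum p / p := by
    intro i hi j hj
    have hi' : (i : ℕ) < p := not_last_lt p (Finset.ne_of_mem_erase hi)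
    have hj' : (j : ℕ) < p := not_last_lt p (Finset.ne_of_mem_erase hj)
    have hij : i ≠ j := by
      intro hEq
      exact (Finset.disjoint_left.mp hIJ (Finset.mem_of_mem_erase hi))
        (hEq ▸ Finset.mem_of_mem_erase hj)
    have hne : a ⟨i, hi'⟩ ≠ a ⟨j, hj'⟩ := by
      intro hEq
      apply hij
      have h2 : (⟨(i : ℕ), hi'⟩ : Fin p) = ⟨(j : ℕ), hj'⟩ := ha.1 hEq
      have h3 : (i : ℕ) = (j : ℕ) := by simpa using h2
      exact Fin.ext h3
    have := hermCol_main p a b hodd hb hbr hi' hj' hne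
    simp only [hhdef]
    rw [this]
    simp only [hfdef, dif_pos hi', dif_pos hj']
  -- injectivity of `f` on the index sets
  have hinj : ∀ (K : Finset (Fin (p+1))), (∀ x ∈ K, (x : ℕ) < p) →
      ∀ x ∈ K, ∀ y ∈ K, f x = f y → x = y := by
    intro K hK x hx y hy hxy
    have hx' := hK x hx
    have hy' := hK y hy
    simp only [hfdef, dif_pos hx', dif_pos hy'] at hxy
    have h2 : (⟨(x : ℕ), hx'⟩ : Fin p) = ⟨(y : ℕ), hy'⟩ := ha.1 hxy
    have h3 : (x : ℕ) = (y : ℕ) := by simpa using h2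
    exact Fin.ext h3
  have hIlt : ∀ x ∈ I', (x : ℕ) < p := fun x hx => not_last_lt p (Finset.ne_of_mem_erase hx)
  have hJlt : ∀ x ∈ J', (x : ℕ) < p := fun x hx => not_last_lt p (Finset.ne_of_mem_erase hx)
  set S : Finset (ZMod p) := I'.image f with hSdef
  set T : Finset (ZMod p) := J'.image f with hTdef
  have hScard : S.card = I'.card := Finset.card_image_of_injOn fun x hx y hy =>
    hinj I' hIlt x hx y hy
  have hTcard : T.card = J'.card := Finset.card_image_of_injOn fun x hx y hy =>
    hinj J' hJlt x hx y hy
  have hI'card : (I'.card : ℝ) ≤ (I.card : ℝ) := by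
    exact_mod_cast Finset.card_le_card (Finset.erase_subset _ _)
  have hJ'card : (J'.card : ℝ) ≤ (J.card : ℝ) := by
    exact_mod_cast Finset.card_le_card (Finset.erase_subset _ _)
  -- main term bound
  have hmainB : ‖∑ i ∈ I', ∑ j ∈ J', h i j‖ ≤ R := by
    have hfact : ∑ i ∈ I', ∑ j ∈ J', h i j
        = (((∑ s ∈ S, ∑ t ∈ T, (paleyChar p (s - t) : ℝ)) : ℝ) : ℂ) * (gsum p / p) := by
      have e1 : ∑ i ∈ I', ∑ j ∈ J', h i j
          = (∑ i ∈ I', ∑ j ∈ J', qchar p (f i - f j)) * (gsum p / p) := by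
        rw [Finset.sum_mul]
        refine Finset.sum_congr rfl fun i hi => ?_
        rw [Finset.sum_mul]
        refine Finset.sum_congr rfl fun j hj => ?_
        rw [hmem i hi j hj]
        ring
      have e2 : ∑ s ∈ S, ∑ t ∈ T, qchar p (s - t)
          = ∑ i ∈ I', ∑ j ∈ J', qchar p (f i - f j) := by
        rw [hSdef, Finset.sum_image (fun x hx y hy => hinj I' hIlt x hx y hy)]
        refine Finset.sum_congr rfl fun i _ => ?_
        rw [hTdef, Finset.sum_image (fun x hx y hy => hinj J' hJlt x hx y hy)]
      have e3 : (((∑ s ∈ S, ∑ t ∈ T, (paleyChar p (s - t) : ℝ)) : ℝ) : ℂ)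
          = ∑ s ∈ S, ∑ t ∈ T, qchar p (s - t) := by
        push_cast
        refine Finset.sum_congr rfl fun s _ => Finset.sum_congr rfl fun t _ => ?_
        rw [← paleyChar_eq]
      rw [e1, ← e2, ← e3]
    rw [hfact, norm_mul, Complex.norm_real, Real.norm_eq_abs, norm_div, abs_gsum p hodd, Complex.norm_natCast]
    have hcb := charBound p α β₀ τ h1p hτge hP S T
      (by rw [hScard]; exact hI'card.trans hI) (by rw [hTcard]; exact hJ'card.trans hJ)
    have hsqle : Real.sqrt ((S.card : ℝ) * T.card)
        ≤ Real.sqrt ((I.card : ℝ) * J.card) := by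
      apply Real.sqrt_le_sqrt
      rw [hScard, hTcard]
      exact mul_le_mul hI'card hJ'card (Nat.cast_nonneg _) (Nat.cast_nonneg _)
    have step : |∑ s ∈ S, ∑ t ∈ T, (paleyChar p (s - t) : ℝ)| * (Real.sqrt p / p)
        ≤ ((p : ℝ) ^ τ * Real.sqrt ((I.card : ℝ) * J.card)) * (Real.sqrt p / p) := by
      apply mul_le_mul_of_nonneg_right _ (by positivity)
      exact hcb.trans (mul_le_mul_of_nonneg_left hsqle (by positivity))
    refine step.trans (le_of_eq ?_)
    have hfrac : Real.sqrt p / p = (p : ℝ) ^ ((1:ℝ)/2 - 1) := by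
      rw [Real.rpow_sub hp0, Real.rpow_one, Real.sqrt_eq_rpow]
    rw [hRdef, hfrac, mul_right_comm, ← Real.rpow_add hp0]
    ring_nf
  -- cross term bounds
  have hcrossI : Fin.last p ∈ I → ‖∑ j ∈ J, h (Fin.last p) j‖ ≤ R := by
    intro heI
    have heJ : Fin.last p ∉ J := Finset.disjoint_left.mp hIJ heI
    have habs : ∀ j ∈ J, ‖h (Fin.last p) j‖ = 1 / Real.sqrt p := by
      intro j hj
      have hjne : j ≠ Fin.last p := fun hEq => heJ (hEq ▸ hj)
      exact abs_hermCol_left p a b (not_last_lt p hjne)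
    calc ‖∑ j ∈ J, h (Fin.last p) j‖
        ≤ ∑ j ∈ J, ‖h (Fin.last p) j‖ := norm_sum_le _ _
      _ = (J.card : ℝ) * (1 / Real.sqrt p) := by
          rw [Finset.sum_congr rfl habs, Finset.sum_const, nsmul_eq_mul]
      _ = (J.card : ℝ) / Real.sqrt p := by ring
      _ ≤ R := by
          rw [hRdef]
          have hI1 : (1 : ℝ) ≤ (I.card : ℝ) := by
            exact_mod_cast Finset.card_pos.mpr ⟨_, heI⟩
          exact cross_bound p τ β₀ h1p hβτ hI1 (Nat.cast_nonneg _) hJ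
  have hcrossJ : Fin.last p ∈ J → ‖∑ i ∈ I', h i (Fin.last p)‖ ≤ R := by
    intro heJ
    have habs : ∀ i ∈ I', ‖h i (Fin.last p)‖ = 1 / Real.sqrt p := by
      intro i hi
      exact abs_hermCol_right p a b (hIlt i hi)
    calc ‖∑ i ∈ I', h i (Fin.last p)‖
        ≤ ∑ i ∈ I', ‖h i (Fin.last p)‖ := norm_sum_le _ _
      _ = (I'.card : ℝ) * (1 / Real.sqrt p) := by
          rw [Finset.sum_congr rfl habs, Finset.sum_const, nsmul_eq_mul]
      _ ≤ (I.card : ℝ) / Real.sqrt p := by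
          rw [mul_one_div]
          gcongr
      _ ≤ R := by
          rw [hRdef, mul_comm ((I.card : ℝ)) ((J.card : ℝ))]
          have hJ1 : (1 : ℝ) ≤ (J.card : ℝ) := by
            exact_mod_cast Finset.card_pos.mpr ⟨_, heJ⟩
          exact cross_bound p τ β₀ h1p hβτ hJ1 (Nat.cast_nonneg _) hI
  -- splitting of the double sum
  have hsplit : (∑ i ∈ I, ∑ j ∈ J, h i j)
      = (∑ i ∈ I', ∑ j ∈ J', h i j)
        + (if Fin.last p ∈ J then ∑ i ∈ I', h i (Fin.last p) else 0)
        + (if Fin.last p ∈ I then ∑ j ∈ J, h (Fin.last p) j else 0) := by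
    by_cases heI : Fin.last p ∈ I
    · have heJ : Fin.last p ∉ J := Finset.disjoint_left.mp hIJ heI
      have hJJ : J' = J := by rw [hJ'def, Finset.erase_eq_of_notMem heJ]
      rw [if_pos heI, if_neg heJ, add_zero, hJJ]
      exact (Finset.sum_erase_add I _ heI).symm
    · have hII : I' = I := by rw [hI'def, Finset.erase_eq_of_notMem heI]
      rw [if_neg heI, add_zero, hII]
      by_cases heJ : Fin.last p ∈ J
      · rw [if_pos heJ]
        calc ∑ i ∈ I, ∑ j ∈ J, h i j
            = ∑ i ∈ I, (∑ j ∈ J', h i j + h i (Fin.last p)) :=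
              Finset.sum_congr rfl fun i _ => (Finset.sum_erase_add J _ heJ).symm
          _ = _ := by rw [Finset.sum_add_distrib]
      · rw [if_neg heJ, add_zero, hJ'def, Finset.erase_eq_of_notMem heJ]
  -- combine
  have hBC : ‖(if Fin.last p ∈ J then ∑ i ∈ I', h i (Fin.last p) else 0)‖
      + ‖(if Fin.last p ∈ I then ∑ j ∈ J, h (Fin.last p) j else 0)‖ ≤ R := by
    by_cases heI : Fin.last p ∈ I
    · have heJ : Fin.last p ∉ J := Finset.disjoint_left.mp hIJ heI
      rw [if_neg heJ, if_pos heI, norm_zero, zero_add]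
      exact hcrossI heI
    · rw [if_neg heI, norm_zero, add_zero]
      by_cases heJ : Fin.last p ∈ J
      · rw [if_pos heJ]
        exact hcrossJ heJ
      · rw [if_neg heJ, norm_zero]
        exact hR0
  calc ‖∑ i ∈ I, ∑ j ∈ J, h i j‖
      ≤ ‖(∑ i ∈ I', ∑ j ∈ J', h i j)
          + (if Fin.last p ∈ J then ∑ i ∈ I', h i (Fin.last p) else 0)‖
        + ‖(if Fin.last p ∈ I then ∑ j ∈ J, h (Fin.last p) j else 0)‖ := by
        rw [hsplit]; exact norm_add_le _ _
    _ ≤ ‖∑ i ∈ I', ∑ j ∈ J', h i j‖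
        + ‖(if Fin.last p ∈ J then ∑ i ∈ I', h i (Fin.last p) else 0)‖
        + ‖(if Fin.last p ∈ I then ∑ j ∈ J, h (Fin.last p) j else 0)‖ := by
        have := norm_add_le (∑ i ∈ I', ∑ j ∈ J', h i j)
          ((if Fin.last p ∈ J then ∑ i ∈ I', h i (Fin.last p) else 0))
        linarith
    _ ≤ R + R := by linarith [hmainB, hBC]
    _ = 2 * (p : ℝ) ^ (τ - 1 / 2) * Real.sqrt ((I.card : ℝ) * (J.card : ℝ)) := by
        rw [hRdef]; ring
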